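/- For every v ∈ H with 𝐈v = −v one has T*(Tv) = (3/4)Y₊v, and the spectrum of T⁻ (the restriction of T to H⁻) is contained in the closed disk D := {z ∈ ℂ : |z| ≤ √3/2}. -/

import Mathlib

noncomputable section

abbrev SL2Z := Matrix.SpecialLinearGroup (Fin 2) ℤ

def Lmat : SL2Z := ⟨!![1, 1; 0, 1], by decide⟩
def Rmat : SL2Z := ⟨!![1, 0; 1, 1], by decide⟩
def Jmat : SL2Z := ⟨!![0, 1; -1, 0], by decide⟩
def Imat : SL2Z := ⟨!![-1, 0; 0, -1], by decide⟩

variable {H : Type*} [NormedAddCommGroup H] [InnerProductSpace ℂ H] [CompleteSpace H]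

/-- The bounded operator associated to a group element by the unitary representation. -/
def rop (ρ : SL2Z →* unitary (H →L[ℂ] H)) (g : SL2Z) : H →L[ℂ] H := (ρ g : H →L[ℂ] H)

/-- The Markov operator T = (𝐋 + 𝐑)/2. -/
def opT (ρ : SL2Z →* unitary (H →L[ℂ] H)) : H →L[ℂ] H := (2 : ℂ)⁻¹ • (rop ρ Lmat + rop ρ Rmat)

/-- Y₊ = (1/3)((3/2)·id − (1/2)𝐈 + 𝐑⁻¹𝐋 + 𝐋⁻¹𝐑). -/
def opYp (ρ : SL2Z →* unitary (H →L[ℂ] H)) : H →L[ℂ] H :=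
  (3 : ℂ)⁻¹ • ((3 / 2 : ℂ) • (1 : H →L[ℂ] H) - (2 : ℂ)⁻¹ • rop ρ Imat
    + rop ρ Rmat⁻¹ * rop ρ Lmat + rop ρ Lmat⁻¹ * rop ρ Rmat)

/-- Y₋ = 𝐉* Y₊ 𝐉. -/
def opYm (ρ : SL2Z →* unitary (H →L[ℂ] H)) : H →L[ℂ] H :=
  ContinuousLinearMap.adjoint (rop ρ Jmat) * opYp ρ * rop ρ Jmat
/-- H⁻ = {v ∈ H : 𝐈v = −v}, a closed subspace of H. -/
def Hminus (ρ : SL2Z →* unitary (H →L[ℂ] H)) : Submodule ℂ H where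
  carrier := {v | rop ρ Imat v = -v}
  add_mem' := by
    intro a b ha hb
    simp only [Set.mem_setOf_eq, map_add] at *
    rw [ha, hb]; abel
  zero_mem' := by simp
  smul_mem' := by
    intro c v hv
    simp only [Set.mem_setOf_eq, map_smul] at *
    rw [hv, smul_neg]

section Aux
open scoped InnerProductSpace

def Qmat : SL2Z := ⟨!![1, 1; -1, 0], by decide⟩
def Qmat' : SL2Z := ⟨!![0, -1; 1, 1], by decide⟩

lemma Rmat_mul_Qmat : Rmat * Qmat = Lmat := Subtype.ext (by decide)
lemma Lmat_mul_Qmat' : Lmat * Qmat' = Rmat := Subtype.ext (by decide)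
lemma Qmat_cube : Qmat * (Qmat * Qmat) = Imat := Subtype.ext (by decide)
lemma Rinv_mul_L : Rmat⁻¹ * Lmat = Qmat := by rw [← Rmat_mul_Qmat, inv_mul_cancel_left]
lemma Linv_mul_R : Lmat⁻¹ * Rmat = Qmat' := by rw [← Lmat_mul_Qmat', inv_mul_cancel_left]

variable {H : Type*} [NormedAddCommGroup H] [InnerProductSpace ℂ H] [CompleteSpace H]

lemma rop_mul (ρ : SL2Z →* unitary (H →L[ℂ] H)) (g h : SL2Z) :
    rop ρ (g * h) = rop ρ g * rop ρ h := by
  rw [rop, map_mul]; rfl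

lemma rop_one (ρ : SL2Z →* unitary (H →L[ℂ] H)) : rop ρ 1 = 1 := by
  rw [rop, map_one]; rfl

lemma rop_star (ρ : SL2Z →* unitary (H →L[ℂ] H)) (g : SL2Z) :
    star (rop ρ g) = rop ρ g⁻¹ := by
  rw [rop, rop, map_inv, ← Unitary.star_eq_inv, Unitary.coe_star]

lemma rop_inv_apply (ρ : SL2Z →* unitary (H →L[ℂ] H)) (g : SL2Z) (v : H) :
    rop ρ g⁻¹ (rop ρ g v) = v := by
  have h : rop ρ g⁻¹ * rop ρ g = 1 := by
    rw [← rop_mul, inv_mul_cancel, rop_one]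
  calc rop ρ g⁻¹ (rop ρ g v) = (rop ρ g⁻¹ * rop ρ g) v := rfl
    _ = v := by rw [h]; rfl

lemma rop_adjoint_apply (ρ : SL2Z →* unitary (H →L[ℂ] H)) (g : SL2Z) (v : H) :
    ContinuousLinearMap.adjoint (rop ρ g) (rop ρ g v) = v := by
  rw [← ContinuousLinearMap.star_eq_adjoint, rop_star, rop_inv_apply]

lemma rop_inner (ρ : SL2Z →* unitary (H →L[ℂ] H)) (g : SL2Z) (x y : H) :
    ⟪rop ρ g x, rop ρ g y⟫_ℂ = ⟪x, y⟫_ℂ := by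
  rw [← ContinuousLinearMap.adjoint_inner_left (rop ρ g) y (rop ρ g x),
    rop_adjoint_apply]

lemma rop_norm (ρ : SL2Z →* unitary (H →L[ℂ] H)) (g : SL2Z) (v : H) :
    ‖rop ρ g v‖ = ‖v‖ := by
  rw [norm_eq_sqrt_re_inner (𝕜 := ℂ) (rop ρ g v), norm_eq_sqrt_re_inner (𝕜 := ℂ) v, rop_inner]

lemma adjoint_opT (ρ : SL2Z →* unitary (H →L[ℂ] H)) :
    ContinuousLinearMap.adjoint (opT ρ) = (2 : ℂ)⁻¹ • (rop ρ Lmat⁻¹ + rop ρ Rmat⁻¹) := by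
  rw [← ContinuousLinearMap.star_eq_adjoint, opT, star_smul, star_add, rop_star, rop_star]
  congr 1
  simp

lemma part1 (ρ : SL2Z →* unitary (H →L[ℂ] H)) (v : H) (hv : rop ρ Imat v = -v) :
    ContinuousLinearMap.adjoint (opT ρ) (opT ρ v) = (3 / 4 : ℂ) • opYp ρ v := by
  rw [adjoint_opT, opYp, opT]
  simp only [ContinuousLinearMap.smul_apply, ContinuousLinearMap.add_apply,
    ContinuousLinearMap.sub_apply, ContinuousLinearMap.mul_apply,
    ContinuousLinearMap.one_apply, map_smul, map_add, hv]
  rw [rop_inv_apply, rop_inv_apply]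
  module

lemma mem_Hminus (ρ : SL2Z →* unitary (H →L[ℂ] H)) (v : H) :
    v ∈ Hminus ρ ↔ rop ρ Imat v = -v := Iff.rfl

instance (ρ : SL2Z →* unitary (H →L[ℂ] H)) : CompleteSpace (Hminus ρ) := by
  have h : IsClosed ((Hminus ρ : Set H)) := by
    have he : ((Hminus ρ : Set H)) = {v : H | rop ρ Imat v + v = 0} := by
      ext v
      simp only [SetLike.mem_coe, mem_Hminus, Set.mem_setOf_eq]
      constructor
      · intro h; rw [h]; abel
      · intro h; linear_combination (norm := abel) h
    rw [he]
    exact isClosed_eq (((rop ρ Imat).continuous).add continuous_id) continuous_const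
  exact h.completeSpace_coe

lemma norm_opT_le (ρ : SL2Z →* unitary (H →L[ℂ] H)) (v : H) (hv : rop ρ Imat v = -v) :
    ‖opT ρ v‖ ≤ Real.sqrt 3 / 2 * ‖v‖ := by
  set U : H →L[ℂ] H := rop ρ Qmat with hUdef
  have hU3 : U (U (U v)) = -v := by
    have h1 : U (U (U v)) = rop ρ (Qmat * (Qmat * Qmat)) v := by
      rw [rop_mul, rop_mul]; rfl
    rw [h1, Qmat_cube, hv]
  have hinner : ∀ x y : H, ⟪U x, U y⟫_ℂ = ⟪x, y⟫_ℂ := rop_inner ρ Qmat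
  have hnorm : ∀ x : H, ‖U x‖ = ‖x‖ := rop_norm ρ Qmat
  set r : ℝ := RCLike.re (⟪v, U v⟫_ℂ) with hr
  have h1 : ⟪U v, U (U v)⟫_ℂ = ⟪v, U v⟫_ℂ := hinner _ _
  have h2 : ⟪v, U (U v)⟫_ℂ = -⟪U v, v⟫_ℂ := by
    calc ⟪v, U (U v)⟫_ℂ = ⟪U v, U (U (U v))⟫_ℂ := (hinner _ _).symm
      _ = ⟪U v, -v⟫_ℂ := by rw [hU3]
      _ = -⟪U v, v⟫_ℂ := inner_neg_right _ _
  have hresymm : RCLike.re (⟪U v, v⟫_ℂ) = r := by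
    rw [hr]
    exact inner_re_symm _ _
  have hexp : ‖(v - U v) + U (U v)‖ ^ 2 = 3 * ‖v‖ ^ 2 - 6 * r := by
    rw [@norm_add_sq ℂ, @norm_sub_sq ℂ, inner_sub_left, h1, h2, hnorm, hnorm, hnorm]
    rw [map_sub, map_neg, hresymm, ← hr]
    ring
  have hrle : r ≤ ‖v‖ ^ 2 / 2 := by
    have h0 : (0:ℝ) ≤ ‖(v - U v) + U (U v)‖ ^ 2 := sq_nonneg _
    rw [hexp] at h0
    linarith
  have hsum : ‖U v + v‖ ^ 2 ≤ 3 * ‖v‖ ^ 2 := by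
    rw [@norm_add_sq ℂ, hnorm, hresymm]
    linarith
  have hsum' : ‖U v + v‖ ≤ Real.sqrt 3 * ‖v‖ := by
    have := Real.sqrt_le_sqrt hsum
    rwa [Real.sqrt_sq (norm_nonneg _), Real.sqrt_mul (by norm_num),
      Real.sqrt_sq (norm_nonneg _)] at this
  have hTv : ‖opT ρ v‖ = 2⁻¹ * ‖U v + v‖ := by
    have hL : rop ρ Rmat⁻¹ (rop ρ Lmat v) = U v := by
      calc rop ρ Rmat⁻¹ (rop ρ Lmat v) = rop ρ (Rmat⁻¹ * Lmat) v := by rw [rop_mul]; rfl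
        _ = U v := by rw [Rinv_mul_L]
    calc ‖opT ρ v‖ = ‖(2:ℂ)⁻¹ • (rop ρ Lmat v + rop ρ Rmat v)‖ := rfl
      _ = ‖(2:ℂ)⁻¹‖ * ‖rop ρ Lmat v + rop ρ Rmat v‖ := norm_smul _ _
      _ = 2⁻¹ * ‖rop ρ Rmat⁻¹ (rop ρ Lmat v + rop ρ Rmat v)‖ := by
          rw [rop_norm]; norm_num
      _ = 2⁻¹ * ‖U v + v‖ := by rw [map_add, hL, rop_inv_apply]
  rw [hTv]
  calc 2⁻¹ * ‖U v + v‖ ≤ 2⁻¹ * (Real.sqrt 3 * ‖v‖) := by linarith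
    _ = Real.sqrt 3 / 2 * ‖v‖ := by ring

end Aux

set_option maxHeartbeats 1000000 in
/-- For every v with 𝐈v = −v one has T*(Tv) = (3/4)Y₊v, and the spectrum of T⁻
(the restriction of T to H⁻) is contained in the closed disk of radius √3/2. -/
theorem Tminus_spectrum_in_disk (ρ : SL2Z →* unitary (H →L[ℂ] H)) :
    (∀ v : H, rop ρ Imat v = -v →
      ContinuousLinearMap.adjoint (opT ρ) (opT ρ v) = (3 / 4 : ℂ) • opYp ρ v) ∧
    (∀ Tm : Hminus ρ →L[ℂ] Hminus ρ,
      (∀ v : Hminus ρ, (Tm v : H) = opT ρ (v : H)) →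
      spectrum ℂ Tm ⊆ {z : ℂ | ‖z‖ ≤ Real.sqrt 3 / 2}) := by
  constructor
  · exact fun v hv => part1 ρ v hv
  · intro Tm hTm z hz
    simp only [Set.mem_setOf_eq]
    rcases subsingleton_or_nontrivial (Hminus ρ) with hsub | hnt
    · exfalso
      exact (spectrum.mem_iff.mp hz) (isUnit_of_subsingleton _)
    · have hb : ‖Tm‖ ≤ Real.sqrt 3 / 2 := by
        refine Tm.opNorm_le_bound (by positivity) fun v => ?_
        have h1 : ‖Tm v‖ = ‖(Tm v : H)‖ := rfl
        have h2 : ‖v‖ = ‖(v : H)‖ := rfl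
        rw [h1, h2, hTm v]
        exact norm_opT_le ρ (v : H) v.2
      have := @spectrum.norm_le_norm_of_mem ℂ (Hminus ρ →L[ℂ] Hminus ρ) _ _ _ _ _ Tm z hz
      linarith
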